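/- Sobolev mapping property of homogeneous smoothing operators: Let μ ≥ 0, ρ ≥ 0, C₀ > 0, and s0, s ∈ ℝ with s0 > μ + 1/2 and s ≥ s0. Suppose M_{j,k} ∈ ℂ, defined for j, k ∈ ℤ \ {0} with j ≠ k, satisfy |M_{j,k}| ≤ C₀·min(|j−k|, |k|)^μ·max(|j−k|, |k|)^{−ρ}. Then there exists a constant C > 0, depending only on s, s0, μ, ρ, C₀, such that for all sequences u, v : ℤ → ℂ with ‖u‖_s < ∞ and ‖v‖_s < ∞, the sequence w defined by w_j := Σ_{k ≠ 0, k ≠ j} M_{j,k}·u_{j−k}·v_k for j ≠ 0 and w_0 := 0 is given by absolutely convergent sums and satisfies ‖w‖_{s+ρ} ≤ C·(‖u‖_s·‖v‖_{s0} + ‖u‖_{s0}·‖v‖_s). -/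

import Mathlib

/-- The `H^s` Sobolev norm of a sequence of Fourier coefficients. -/
noncomputable def Hnorm (s : ℝ) (u : ℤ → ℂ) : ℝ :=
  Real.sqrt (∑' j : ℤ, (max 1 |(j : ℝ)|) ^ (2 * s) * ‖u j‖ ^ 2)

/-- Finiteness of the `H^s` Sobolev norm of a sequence of Fourier coefficients. -/
def HSummable (s : ℝ) (u : ℤ → ℂ) : Prop :=
  Summable fun j : ℤ => (max 1 |(j : ℝ)|) ^ (2 * s) * ‖u j‖ ^ 2

/-- The Fourier coefficients of the homogeneous smoothing operator `R(u)v` with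
coefficients `M_{j,k}` acting on zero-average periodic functions. -/
noncomputable def smoothW (M : ℤ → ℤ → ℂ) (u v : ℤ → ℂ) (j : ℤ) : ℂ :=
  if j = 0 then 0 else
    ∑' k : ℤ, if k = 0 ∨ k = j then 0 else M j k * u (j - k) * v k
open scoped ENNReal NNReal
open MeasureTheory

noncomputable def wgt (t : ℝ) (j : ℤ) : ℝ := (max 1 |(j : ℝ)|) ^ t

lemma base_one_le (j : ℤ) : (1:ℝ) ≤ max 1 |(j : ℝ)| := le_max_left _ _
lemma base_pos (j : ℤ) : (0:ℝ) < max 1 |(j : ℝ)| := lt_of_lt_of_le one_pos (base_one_le j)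

lemma wgt_pos (t : ℝ) (j : ℤ) : 0 < wgt t j := Real.rpow_pos_of_pos (base_pos j) t
lemma wgt_nonneg (t : ℝ) (j : ℤ) : 0 ≤ wgt t j := (wgt_pos t j).le

lemma wgt_mul (t t' : ℝ) (j : ℤ) : wgt t j * wgt t' j = wgt (t + t') j := by
  rw [wgt, wgt, wgt, ← Real.rpow_add (base_pos j)]

lemma wgt_sq (t : ℝ) (j : ℤ) : wgt t j ^ 2 = wgt (2 * t) j := by
  rw [wgt, wgt, ← Real.rpow_natCast ((max 1 |(j : ℝ)|) ^ t) 2, ← Real.rpow_mul (base_pos j).le]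
  norm_num [mul_comm]

lemma wgt_zero' (t : ℝ) : wgt t 0 = 1 := by
  simp [wgt]

lemma wgt_ne_zero (t : ℝ) {j : ℤ} (hj : j ≠ 0) : wgt t j = |(j : ℝ)| ^ t := by
  have h1 : (1:ℝ) ≤ |(j : ℝ)| := by
    rw [← Int.cast_abs]
    exact_mod_cast Int.one_le_abs hj
  rw [wgt, max_eq_right h1]

lemma wgt_mono (t t' : ℝ) (h : t ≤ t') (j : ℤ) : wgt t j ≤ wgt t' j :=
  Real.rpow_le_rpow_of_exponent_le (base_one_le j) h

lemma wgt_summable {t : ℝ} (ht : 1 < t) : Summable fun n : ℤ => wgt (-t) n := by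
  have h0 : (0:ℝ) < t := lt_trans one_pos ht
  have hg : Summable fun n : ℤ => |(n : ℝ)| ^ (-t) + (if n = 0 then (1:ℝ) else 0) :=
    (Real.summable_abs_int_rpow ht).add
      (summable_of_ne_finset_zero (s := {0}) (by intro b hb; simp at hb; simp [hb]))
  refine Summable.of_nonneg_of_le (fun n => wgt_nonneg _ _) (fun n => ?_) hg
  by_cases hn : n = 0
  · subst hn
    rw [wgt_zero']
    norm_num [Real.zero_rpow (show -t ≠ 0 by linarith)]
  · rw [wgt_ne_zero _ hn, if_neg hn, add_zero]

lemma key_pointwise {μ ρ C₀ s : ℝ} (hρ : 0 ≤ ρ) (hC₀ : 0 < C₀) (hsρ : 0 ≤ s + ρ)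
    (M : ℤ → ℤ → ℂ)
    (hM : ∀ j k : ℤ, j ≠ 0 → k ≠ 0 → j ≠ k →
      ‖M j k‖ ≤
        C₀ * (min |(j : ℝ) - (k : ℝ)| |(k : ℝ)|) ^ μ *
          (max |(j : ℝ) - (k : ℝ)| |(k : ℝ)|) ^ (-ρ))
    (u v : ℤ → ℂ) (j k : ℤ) (hj : j ≠ 0) :
    wgt (s + ρ) j * ‖if k = 0 ∨ k = j then 0 else M j k * u (j - k) * v k‖ ≤
      (C₀ * 2 ^ (s + ρ)) *
        (wgt μ (j - k) * ‖u (j - k)‖ * (wgt s k * ‖v k‖) +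
          wgt s (j - k) * ‖u (j - k)‖ * (wgt μ k * ‖v k‖)) := by
  have hT1nn : 0 ≤ wgt μ (j - k) * ‖u (j - k)‖ * (wgt s k * ‖v k‖) :=
    mul_nonneg (mul_nonneg (wgt_nonneg _ _) (norm_nonneg _))
      (mul_nonneg (wgt_nonneg _ _) (norm_nonneg _))
  have hT2nn : 0 ≤ wgt s (j - k) * ‖u (j - k)‖ * (wgt μ k * ‖v k‖) :=
    mul_nonneg (mul_nonneg (wgt_nonneg _ _) (norm_nonneg _))
      (mul_nonneg (wgt_nonneg _ _) (norm_nonneg _))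
  have hKnn : (0:ℝ) ≤ C₀ * 2 ^ (s + ρ) := by positivity
  by_cases hk : k = 0 ∨ k = j
  · rw [if_pos hk]
    simp only [norm_zero, mul_zero]
    exact mul_nonneg hKnn (add_nonneg hT1nn hT2nn)
  rw [if_neg hk]
  push_neg at hk
  obtain ⟨hk0, hkj⟩ := hk
  have hjk0 : j - k ≠ 0 := sub_ne_zero.mpr (Ne.symm hkj)
  set x : ℝ := |(j:ℝ) - (k:ℝ)| with hxdef
  set y : ℝ := |(k:ℝ)| with hydef
  have hcast : ((j - k : ℤ) : ℝ) = (j:ℝ) - (k:ℝ) := by push_cast; ring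
  have hx1 : 1 ≤ x := by
    rw [hxdef, ← hcast, ← Int.cast_abs]; exact_mod_cast Int.one_le_abs hjk0
  have hy1 : 1 ≤ y := by
    rw [hydef, ← Int.cast_abs]; exact_mod_cast Int.one_le_abs hk0
  have hmax1 : (1:ℝ) ≤ max x y := le_trans hx1 (le_max_left _ _)
  have hmaxpos : (0:ℝ) < max x y := lt_of_lt_of_le one_pos hmax1
  have hwxμ : wgt μ (j - k) = x ^ μ := by rw [wgt_ne_zero _ hjk0, hcast]
  have hwxs : wgt s (j - k) = x ^ s := by rw [wgt_ne_zero _ hjk0, hcast]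
  have hwyμ : wgt μ k = y ^ μ := by rw [wgt_ne_zero _ hk0]
  have hwys : wgt s k = y ^ s := by rw [wgt_ne_zero _ hk0]
  have hMb := hM j k hj hk0 (Ne.symm hkj)
  have h2 : wgt (s + ρ) j ≤ 2 ^ (s + ρ) * (max x y) ^ (s + ρ) := by
    have hj2 : max 1 |(j:ℝ)| ≤ 2 * max x y := by
      have habsj : |(j:ℝ)| ≤ x + y := by
        calc |(j:ℝ)| = |((j:ℝ) - k) + k| := by ring_nf
          _ ≤ x + y := abs_add_le _ _
      have h1' : (1:ℝ) ≤ 2 * max x y := by nlinarith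
      have h2' : x + y ≤ 2 * max x y := by
        have hxm := le_max_left x y; have hym := le_max_right x y; linarith
      exact max_le h1' (le_trans habsj h2')
    calc wgt (s + ρ) j ≤ (2 * max x y) ^ (s + ρ) :=
        Real.rpow_le_rpow (base_pos j).le hj2 hsρ
      _ = 2 ^ (s + ρ) * (max x y) ^ (s + ρ) := Real.mul_rpow (by norm_num) hmaxpos.le
  have hmm : (max x y) ^ (s + ρ) * (max x y) ^ (-ρ) = (max x y) ^ s := by
    rw [← Real.rpow_add hmaxpos]; ring_nf
  have h1 : wgt (s + ρ) j * ‖M j k‖ ≤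
      (C₀ * 2 ^ (s + ρ)) * ((min x y) ^ μ * (max x y) ^ s) := by
    calc wgt (s + ρ) j * ‖M j k‖
        ≤ (2 ^ (s + ρ) * (max x y) ^ (s + ρ)) * (C₀ * (min x y) ^ μ * (max x y) ^ (-ρ)) := by
          apply mul_le_mul h2 hMb (norm_nonneg _) (by positivity)
      _ = (C₀ * 2 ^ (s + ρ)) * ((min x y) ^ μ * ((max x y) ^ (s + ρ) * (max x y) ^ (-ρ))) := by
          ring
      _ = (C₀ * 2 ^ (s + ρ)) * ((min x y) ^ μ * (max x y) ^ s) := by rw [hmm]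
  have habs : ‖M j k * u (j - k) * v k‖
      = ‖M j k‖ * (‖u (j - k)‖ * ‖v k‖) := by
    rw [norm_mul, norm_mul]; ring
  have hstep : wgt (s + ρ) j * ‖M j k * u (j - k) * v k‖ ≤
      (C₀ * 2 ^ (s + ρ)) * ((min x y) ^ μ * (max x y) ^ s) *
        (‖u (j - k)‖ * ‖v k‖) := by
    rw [habs, ← mul_assoc]
    exact mul_le_mul_of_nonneg_right h1
      (mul_nonneg (norm_nonneg _) (norm_nonneg _))
  refine hstep.trans ?_
  rcases le_total x y with hxy | hxy
  · rw [min_eq_left hxy, max_eq_right hxy]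
    have heq : (C₀ * 2 ^ (s + ρ)) * (x ^ μ * y ^ s) *
          (‖u (j - k)‖ * ‖v k‖)
        = (C₀ * 2 ^ (s + ρ)) *
            (wgt μ (j - k) * ‖u (j - k)‖ * (wgt s k * ‖v k‖)) := by
      rw [hwxμ, hwys]; ring
    rw [heq, mul_add]
    exact le_add_of_nonneg_right (mul_nonneg hKnn hT2nn)
  · rw [min_eq_right hxy, max_eq_left hxy]
    have heq : (C₀ * 2 ^ (s + ρ)) * (y ^ μ * x ^ s) *
          (‖u (j - k)‖ * ‖v k‖)
        = (C₀ * 2 ^ (s + ρ)) *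
            (wgt s (j - k) * ‖u (j - k)‖ * (wgt μ k * ‖v k‖)) := by
      rw [hwxs, hwyμ]; ring
    rw [heq, mul_add]
    exact le_add_of_nonneg_left (mul_nonneg hKnn hT1nn)

lemma ennreal_cs (f g : ℤ → ℝ≥0∞) :
    (∑' n, f n * g n) ≤ (∑' n, f n ^ (2:ℝ)) ^ (1/2 : ℝ) * (∑' n, g n ^ (2:ℝ)) ^ (1/2 : ℝ) := by
  have hpq : Real.HolderConjugate 2 2 := Real.HolderConjugate.two_two
  have h := ENNReal.lintegral_mul_le_Lp_mul_Lq (Measure.count : Measure ℤ) hpq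
    (measurable_of_countable f).aemeasurable (measurable_of_countable g).aemeasurable
  simpa [MeasureTheory.lintegral_count] using h

lemma sq_rpow_half (x : ℝ≥0∞) : (x ^ (1/2 : ℝ)) ^ (2:ℝ) = x := by
  rw [← ENNReal.rpow_mul]; norm_num

lemma rpow_two' (x : ℝ≥0∞) : x ^ (2:ℝ) = x * x := by
  rw [show (2:ℝ) = ((2:ℕ):ℝ) by norm_num, ENNReal.rpow_natCast]; ring

lemma conv_sq (f g : ℤ → ℝ≥0∞) :
    ∑' j : ℤ, (∑' k : ℤ, f (j - k) * g k) ^ (2:ℝ) ≤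
      (∑' n : ℤ, f n) ^ (2:ℝ) * ∑' n : ℤ, g n ^ (2:ℝ) := by
  have hshift : ∀ j : ℤ, ∀ h : ℤ → ℝ≥0∞, ∑' k : ℤ, h (j - k) = ∑' n, h n := by
    intro j h
    exact (Equiv.subLeft j).tsum_eq h
  have step1 : ∀ j : ℤ, (∑' k : ℤ, f (j - k) * g k) ^ (2:ℝ) ≤
      (∑' n : ℤ, f n) * ∑' k : ℤ, f (j - k) * g k ^ (2:ℝ) := by
    intro j
    have h1 : (∑' k : ℤ, f (j - k) * g k) ≤
        (∑' k : ℤ, f (j - k)) ^ (1/2:ℝ) * (∑' k : ℤ, f (j - k) * g k ^ (2:ℝ)) ^ (1/2:ℝ) := by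
      have hcs := ennreal_cs (fun k => f (j - k) ^ (1/2:ℝ)) (fun k => f (j - k) ^ (1/2:ℝ) * g k)
      calc (∑' k : ℤ, f (j - k) * g k)
          = ∑' k : ℤ, f (j - k) ^ (1/2:ℝ) * (f (j - k) ^ (1/2:ℝ) * g k) := by
            refine tsum_congr fun k => ?_
            rw [← mul_assoc, ← ENNReal.rpow_add_of_nonneg _ _ (by norm_num) (by norm_num)]
            norm_num
        _ ≤ (∑' k : ℤ, (f (j - k) ^ (1/2:ℝ)) ^ (2:ℝ)) ^ (1/2:ℝ) *
              (∑' k : ℤ, (f (j - k) ^ (1/2:ℝ) * g k) ^ (2:ℝ)) ^ (1/2:ℝ) := hcs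
        _ = (∑' k : ℤ, f (j - k)) ^ (1/2:ℝ) * (∑' k : ℤ, f (j - k) * g k ^ (2:ℝ)) ^ (1/2:ℝ) := by
            have e1 : ∑' k : ℤ, (f (j - k) ^ (1/2:ℝ)) ^ (2:ℝ) = ∑' k : ℤ, f (j - k) :=
              tsum_congr fun k => sq_rpow_half _
            have e2 : ∑' k : ℤ, (f (j - k) ^ (1/2:ℝ) * g k) ^ (2:ℝ)
                = ∑' k : ℤ, f (j - k) * g k ^ (2:ℝ) :=
              tsum_congr fun k => by
                rw [ENNReal.mul_rpow_of_nonneg _ _ (by norm_num : (0:ℝ) ≤ 2), sq_rpow_half]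
            rw [e1, e2]
    calc (∑' k : ℤ, f (j - k) * g k) ^ (2:ℝ)
        ≤ ((∑' k : ℤ, f (j - k)) ^ (1/2:ℝ) *
            (∑' k : ℤ, f (j - k) * g k ^ (2:ℝ)) ^ (1/2:ℝ)) ^ (2:ℝ) :=
          ENNReal.rpow_le_rpow h1 (by norm_num)
      _ = (∑' k : ℤ, f (j - k)) * ∑' k : ℤ, f (j - k) * g k ^ (2:ℝ) := by
          rw [ENNReal.mul_rpow_of_nonneg _ _ (by norm_num), sq_rpow_half, sq_rpow_half]
      _ = (∑' n : ℤ, f n) * ∑' k : ℤ, f (j - k) * g k ^ (2:ℝ) := by rw [hshift j f]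
  calc ∑' j : ℤ, (∑' k : ℤ, f (j - k) * g k) ^ (2:ℝ)
      ≤ ∑' j : ℤ, (∑' n : ℤ, f n) * ∑' k : ℤ, f (j - k) * g k ^ (2:ℝ) :=
        ENNReal.tsum_le_tsum step1
    _ = (∑' n : ℤ, f n) * ∑' j : ℤ, ∑' k : ℤ, f (j - k) * g k ^ (2:ℝ) := ENNReal.tsum_mul_left
    _ = (∑' n : ℤ, f n) * ∑' k : ℤ, ∑' j : ℤ, f (j - k) * g k ^ (2:ℝ) := by rw [ENNReal.tsum_comm]
    _ = (∑' n : ℤ, f n) ^ (2:ℝ) * ∑' n : ℤ, g n ^ (2:ℝ) := by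
        have h2 : ∀ k : ℤ, ∑' j : ℤ, f (j - k) * g k ^ (2:ℝ) = (∑' n : ℤ, f n) * g k ^ (2:ℝ) := by
          intro k
          rw [ENNReal.tsum_mul_right]
          congr 1
          exact (Equiv.subRight k).tsum_eq f
        rw [tsum_congr h2, ENNReal.tsum_mul_left, ← mul_assoc, ← rpow_two']

lemma ennreal_add_sq_le (p q : ℝ≥0∞) : (p + q) ^ (2:ℝ) ≤ 4 * (p ^ (2:ℝ) + q ^ (2:ℝ)) := by
  rw [rpow_two', rpow_two', rpow_two']
  have hpq : p * q ≤ p * p + q * q := by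
    rcases le_total p q with h | h
    · calc p * q ≤ q * q := mul_le_mul_left h q
        _ ≤ p * p + q * q := le_add_self
    · calc p * q ≤ p * p := mul_le_mul_right h p
        _ ≤ p * p + q * q := le_add_right le_rfl
  calc (p + q) * (p + q) = p * p + q * q + (p * q + p * q) := by ring
    _ ≤ p * p + q * q + ((p * p + q * q) + (p * p + q * q)) := by gcongr
    _ = 3 * (p * p + q * q) := by ring
    _ ≤ 4 * (p * p + q * q) := mul_le_mul_left (by norm_num) _

noncomputable def eW (t : ℝ) (u : ℤ → ℂ) (n : ℤ) : ℝ≥0∞ :=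
  ENNReal.ofReal (wgt t n * ‖u n‖)

lemma ofReal_sq {a : ℝ} (ha : 0 ≤ a) : ENNReal.ofReal (a ^ 2) = ENNReal.ofReal a ^ (2:ℝ) := by
  rw [rpow_two', ← ENNReal.ofReal_mul ha]; ring_nf

lemma eW_sq (t : ℝ) (u : ℤ → ℂ) (n : ℤ) :
    eW t u n ^ (2:ℝ) = ENNReal.ofReal (wgt (2*t) n * ‖u n‖ ^ 2) := by
  rw [eW, ← ofReal_sq (mul_nonneg (wgt_nonneg _ _) (norm_nonneg _))]
  congr 1
  rw [mul_pow, wgt_sq]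

lemma tsum_eW_sq (t : ℝ) (u : ℤ → ℂ)
    (h : Summable fun n : ℤ => wgt (2*t) n * ‖u n‖ ^ 2) :
    ∑' n : ℤ, eW t u n ^ (2:ℝ)
      = ENNReal.ofReal (∑' n : ℤ, wgt (2*t) n * ‖u n‖ ^ 2) := by
  rw [ENNReal.ofReal_tsum_of_nonneg
    (fun n => mul_nonneg (wgt_nonneg _ _) (by positivity)) h]
  exact tsum_congr fun n => eW_sq t u n

lemma l1_bound (μ s0 : ℝ) (u : ℤ → ℂ) :
    ∑' n : ℤ, eW μ u n ≤
      (∑' n : ℤ, ENNReal.ofReal (wgt (2*(μ - s0)) n)) ^ (1/2:ℝ) *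
        (∑' n : ℤ, eW s0 u n ^ (2:ℝ)) ^ (1/2:ℝ) := by
  have hcs := ennreal_cs (fun n => ENNReal.ofReal (wgt (μ - s0) n)) (eW s0 u)
  have e0 : ∀ n : ℤ, ENNReal.ofReal (wgt (μ - s0) n) * eW s0 u n = eW μ u n := by
    intro n
    rw [eW, eW, ← ENNReal.ofReal_mul (wgt_nonneg _ _), ← mul_assoc, wgt_mul]
    congr 2
    ring_nf
  have e1 : ∀ n : ℤ, (ENNReal.ofReal (wgt (μ - s0) n)) ^ (2:ℝ)
      = ENNReal.ofReal (wgt (2*(μ - s0)) n) := by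
    intro n
    rw [← ofReal_sq (wgt_nonneg _ _), wgt_sq]
  calc ∑' n : ℤ, eW μ u n
      = ∑' n : ℤ, ENNReal.ofReal (wgt (μ - s0) n) * eW s0 u n := (tsum_congr e0).symm
    _ ≤ (∑' n : ℤ, (ENNReal.ofReal (wgt (μ - s0) n)) ^ (2:ℝ)) ^ (1/2:ℝ) *
          (∑' n : ℤ, eW s0 u n ^ (2:ℝ)) ^ (1/2:ℝ) := hcs
    _ = (∑' n : ℤ, ENNReal.ofReal (wgt (2*(μ - s0)) n)) ^ (1/2:ℝ) *
          (∑' n : ℤ, eW s0 u n ^ (2:ℝ)) ^ (1/2:ℝ) := by rw [tsum_congr e1]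

lemma sqrt_add_le' {x y : ℝ} (hx : 0 ≤ x) (hy : 0 ≤ y) :
    Real.sqrt (x + y) ≤ Real.sqrt x + Real.sqrt y := by
  have h1 : x + y ≤ (Real.sqrt x + Real.sqrt y) ^ 2 := by
    nlinarith [Real.sq_sqrt hx, Real.sq_sqrt hy, Real.sqrt_nonneg x, Real.sqrt_nonneg y]
  calc Real.sqrt (x + y) ≤ Real.sqrt ((Real.sqrt x + Real.sqrt y) ^ 2) := Real.sqrt_le_sqrt h1
    _ = Real.sqrt x + Real.sqrt y := Real.sqrt_sq (by positivity)

noncomputable def phiW (t : ℝ) (w : ℤ → ℂ) (j : ℤ) : ℝ :=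
  wgt (2 * t) j * ‖w j‖ ^ 2

/-- Sobolev mapping property of homogeneous smoothing operators:
`‖R(u)v‖_{s+ρ} ≤ C (‖u‖_s ‖v‖_{s0} + ‖u‖_{s0} ‖v‖_s)`, with absolutely convergent sums. -/
theorem smoothing_operator_action (μ ρ C₀ s0 s : ℝ) (hμ : 0 ≤ μ) (hρ : 0 ≤ ρ)
    (hC₀ : 0 < C₀) (hs0 : μ + 1 / 2 < s0) (hs : s0 ≤ s) :
    ∃ C : ℝ, 0 < C ∧
      ∀ M : ℤ → ℤ → ℂ,
        (∀ j k : ℤ, j ≠ 0 → k ≠ 0 → j ≠ k →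
          ‖M j k‖ ≤
            C₀ * (min |(j : ℝ) - (k : ℝ)| |(k : ℝ)|) ^ μ *
              (max |(j : ℝ) - (k : ℝ)| |(k : ℝ)|) ^ (-ρ)) →
      ∀ u v : ℤ → ℂ, HSummable s u → HSummable s v →
        (∀ j : ℤ, j ≠ 0 →
          Summable fun k : ℤ =>
            ‖if k = 0 ∨ k = j then 0 else M j k * u (j - k) * v k‖) ∧
        HSummable (s + ρ) (smoothW M u v) ∧
        Hnorm (s + ρ) (smoothW M u v) ≤
          C * (Hnorm s u * Hnorm s0 v + Hnorm s0 u * Hnorm s v) := by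
  have hsρ : 0 ≤ s + ρ := by linarith
  set K : ℝ := C₀ * 2 ^ (s + ρ) with hKdef
  have hKpos : 0 < K := by positivity
  have ht : (1:ℝ) < 2 * (s0 - μ) := by linarith
  have hSsum : Summable fun n : ℤ => wgt (2 * (μ - s0)) n := by
    have hexp : 2 * (μ - s0) = -(2 * (s0 - μ)) := by ring
    rw [hexp]
    exact wgt_summable ht
  set Ssum : ℝ := ∑' n : ℤ, wgt (2 * (μ - s0)) n with hSdef
  have hSnn : 0 ≤ Ssum := tsum_nonneg fun n => wgt_nonneg _ _
  have hSpos : 0 < Ssum := by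
    have h0 : wgt (2 * (μ - s0)) 0 ≤ Ssum := Summable.le_tsum hSsum 0 fun n _ => wgt_nonneg _ _
    rw [wgt_zero'] at h0
    linarith
  set C : ℝ := Real.sqrt (4 * K ^ 2 * Ssum) with hCdef
  have hCpos : 0 < C := Real.sqrt_pos.mpr (by positivity)
  refine ⟨C, hCpos, ?_⟩
  intro M hM u v hu hv
  -- real sums
  set Nu : ℝ := ∑' n : ℤ, wgt (2 * s) n * ‖u n‖ ^ 2 with hNu
  set Nv : ℝ := ∑' n : ℤ, wgt (2 * s) n * ‖v n‖ ^ 2 with hNv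
  set Nu0 : ℝ := ∑' n : ℤ, wgt (2 * s0) n * ‖u n‖ ^ 2 with hNu0
  set Nv0 : ℝ := ∑' n : ℤ, wgt (2 * s0) n * ‖v n‖ ^ 2 with hNv0
  have hu' : Summable fun n : ℤ => wgt (2 * s) n * ‖u n‖ ^ 2 := hu
  have hv' : Summable fun n : ℤ => wgt (2 * s) n * ‖v n‖ ^ 2 := hv
  have hcomp : ∀ w : ℤ → ℂ, (Summable fun n : ℤ => wgt (2 * s) n * ‖w n‖ ^ 2) →
      Summable fun n : ℤ => wgt (2 * s0) n * ‖w n‖ ^ 2 := by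
    intro w hw
    refine Summable.of_nonneg_of_le (fun n => mul_nonneg (wgt_nonneg _ _) (by positivity))
      (fun n => mul_le_mul_of_nonneg_right (wgt_mono _ _ (by linarith) n) (by positivity)) hw
  have hu0' := hcomp u hu'
  have hv0' := hcomp v hv'
  -- ENNReal quantities
  set A : ℝ≥0∞ := ∑' n : ℤ, eW s u n ^ (2:ℝ) with hAdef
  set B : ℝ≥0∞ := ∑' n : ℤ, eW s v n ^ (2:ℝ) with hBdef
  set A0 : ℝ≥0∞ := ∑' n : ℤ, eW s0 u n ^ (2:ℝ) with hA0def
  set B0 : ℝ≥0∞ := ∑' n : ℤ, eW s0 v n ^ (2:ℝ) with hB0def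
  set L1u : ℝ≥0∞ := ∑' n : ℤ, eW μ u n with hL1udef
  set L1v : ℝ≥0∞ := ∑' n : ℤ, eW μ v n with hL1vdef
  have hA : A = ENNReal.ofReal Nu := tsum_eW_sq s u hu'
  have hB : B = ENNReal.ofReal Nv := tsum_eW_sq s v hv'
  have hA0 : A0 = ENNReal.ofReal Nu0 := tsum_eW_sq s0 u hu0'
  have hB0 : B0 = ENNReal.ofReal Nv0 := tsum_eW_sq s0 v hv0'
  have hAne : A ≠ ⊤ := by rw [hA]; exact ENNReal.ofReal_ne_top
  have hBne : B ≠ ⊤ := by rw [hB]; exact ENNReal.ofReal_ne_top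
  have hA0ne : A0 ≠ ⊤ := by rw [hA0]; exact ENNReal.ofReal_ne_top
  have hB0ne : B0 ≠ ⊤ := by rw [hB0]; exact ENNReal.ofReal_ne_top
  set Se : ℝ≥0∞ := (ENNReal.ofReal Ssum) ^ (1/2:ℝ) with hSedef
  have hSene : Se ≠ ⊤ :=
    ENNReal.rpow_ne_top_of_nonneg (by norm_num) ENNReal.ofReal_ne_top
  have hOS : ∑' n : ℤ, ENNReal.ofReal (wgt (2 * (μ - s0)) n) = ENNReal.ofReal Ssum :=
    (ENNReal.ofReal_tsum_of_nonneg (fun n => wgt_nonneg _ _) hSsum).symm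
  have hL1u : L1u ≤ Se * A0 ^ (1/2:ℝ) := by
    have := l1_bound μ s0 u
    rwa [hOS] at this
  have hL1v : L1v ≤ Se * B0 ^ (1/2:ℝ) := by
    have := l1_bound μ s0 v
    rwa [hOS] at this
  have hL1une : L1u ≠ ⊤ := ne_top_of_le_ne_top
    (ENNReal.mul_ne_top hSene (ENNReal.rpow_ne_top_of_nonneg (by norm_num) hA0ne)) hL1u
  have hL1vne : L1v ≠ ⊤ := ne_top_of_le_ne_top
    (ENNReal.mul_ne_top hSene (ENNReal.rpow_ne_top_of_nonneg (by norm_num) hB0ne)) hL1v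
  -- convolution quantities
  set P : ℤ → ℝ≥0∞ := fun j => ∑' k : ℤ, eW μ u (j - k) * eW s v k with hPdef
  set Q : ℤ → ℝ≥0∞ := fun j => ∑' k : ℤ, eW s u (j - k) * eW μ v k with hQdef
  set KE : ℝ≥0∞ := ENNReal.ofReal K with hKEdef
  have hKEne : KE ≠ ⊤ := ENNReal.ofReal_ne_top
  -- pointwise bound in ENNReal
  have hpt : ∀ j k : ℤ, j ≠ 0 →
      ENNReal.ofReal (wgt (s + ρ) j) *
          ENNReal.ofReal (‖if k = 0 ∨ k = j then 0 else M j k * u (j - k) * v k‖) ≤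
        KE * (eW μ u (j - k) * eW s v k + eW s u (j - k) * eW μ v k) := by
    intro j k hj
    rw [← ENNReal.ofReal_mul (wgt_nonneg _ _)]
    refine le_trans (ENNReal.ofReal_le_ofReal (key_pointwise hρ hC₀ hsρ M hM u v j k hj)) ?_
    have hT1nn : 0 ≤ wgt μ (j - k) * ‖u (j - k)‖ * (wgt s k * ‖v k‖) :=
      mul_nonneg (mul_nonneg (wgt_nonneg _ _) (norm_nonneg _))
        (mul_nonneg (wgt_nonneg _ _) (norm_nonneg _))
    have hT2nn : 0 ≤ wgt s (j - k) * ‖u (j - k)‖ * (wgt μ k * ‖v k‖) :=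
      mul_nonneg (mul_nonneg (wgt_nonneg _ _) (norm_nonneg _))
        (mul_nonneg (wgt_nonneg _ _) (norm_nonneg _))
    rw [ENNReal.ofReal_mul hKpos.le, ENNReal.ofReal_add hT1nn hT2nn,
      ENNReal.ofReal_mul (mul_nonneg (wgt_nonneg _ _) (norm_nonneg _)),
      ENNReal.ofReal_mul (mul_nonneg (wgt_nonneg _ _) (norm_nonneg _))]
    exact le_rfl
  -- summed over k
  have hEWle : ∀ j : ℤ, j ≠ 0 →
      ENNReal.ofReal (wgt (s + ρ) j) *
          ∑' k : ℤ, ENNReal.ofReal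
            (‖if k = 0 ∨ k = j then 0 else M j k * u (j - k) * v k‖) ≤
        KE * (P j + Q j) := by
    intro j hj
    rw [← ENNReal.tsum_mul_left]
    calc (∑' k : ℤ, ENNReal.ofReal (wgt (s + ρ) j) *
            ENNReal.ofReal
              (‖if k = 0 ∨ k = j then 0 else M j k * u (j - k) * v k‖))
        ≤ ∑' k : ℤ, KE * (eW μ u (j - k) * eW s v k + eW s u (j - k) * eW μ v k) :=
          ENNReal.tsum_le_tsum fun k => hpt j k hj
      _ = KE * ∑' k : ℤ, (eW μ u (j - k) * eW s v k + eW s u (j - k) * eW μ v k) :=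
          ENNReal.tsum_mul_left
      _ = KE * (P j + Q j) := by rw [ENNReal.tsum_add]
  -- per-j finiteness
  have hsup : ∀ (t : ℝ) (w : ℤ → ℂ) (X : ℝ≥0∞), (∑' n : ℤ, eW t w n ^ (2:ℝ)) = X →
      ∀ n : ℤ, eW t w n ≤ X ^ (1/2:ℝ) := by
    intro t w X hX n
    have h1 : eW t w n ^ (2:ℝ) ≤ X := hX ▸ ENNReal.le_tsum n
    calc eW t w n = (eW t w n ^ (2:ℝ)) ^ (1/2:ℝ) := by
          rw [← ENNReal.rpow_mul]; norm_num
      _ ≤ X ^ (1/2:ℝ) := ENNReal.rpow_le_rpow h1 (by norm_num)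
  have hPle : ∀ j : ℤ, P j ≤ L1u * B ^ (1/2:ℝ) := by
    intro j
    calc P j ≤ ∑' k : ℤ, eW μ u (j - k) * B ^ (1/2:ℝ) :=
        ENNReal.tsum_le_tsum fun k => mul_le_mul_right (hsup s v B hBdef.symm k) _
      _ = (∑' k : ℤ, eW μ u (j - k)) * B ^ (1/2:ℝ) := ENNReal.tsum_mul_right
      _ = L1u * B ^ (1/2:ℝ) := by
          have hsh : ∑' k : ℤ, eW μ u (j - k) = L1u := by
            simpa using (Equiv.subLeft j).tsum_eq (eW μ u)
          rw [hsh]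
  have hQle : ∀ j : ℤ, Q j ≤ A ^ (1/2:ℝ) * L1v := by
    intro j
    calc Q j ≤ ∑' k : ℤ, A ^ (1/2:ℝ) * eW μ v k :=
        ENNReal.tsum_le_tsum fun k => mul_le_mul_left (hsup s u A hAdef.symm (j - k)) _
      _ = A ^ (1/2:ℝ) * L1v := ENNReal.tsum_mul_left
  have hPne : ∀ j : ℤ, P j ≠ ⊤ := fun j => ne_top_of_le_ne_top
    (ENNReal.mul_ne_top hL1une (ENNReal.rpow_ne_top_of_nonneg (by norm_num) hBne)) (hPle j)
  have hQne : ∀ j : ℤ, Q j ≠ ⊤ := fun j => ne_top_of_le_ne_top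
    (ENNReal.mul_ne_top (ENNReal.rpow_ne_top_of_nonneg (by norm_num) hAne) hL1vne) (hQle j)
  -- claim 1 : summability in k
  have hsum_k : ∀ j : ℤ, j ≠ 0 →
      Summable fun k : ℤ =>
        ‖if k = 0 ∨ k = j then 0 else M j k * u (j - k) * v k‖ := by
    intro j hj
    have hfin : (∑' k : ℤ, ENNReal.ofReal
        (‖if k = 0 ∨ k = j then 0 else M j k * u (j - k) * v k‖)) ≠ ⊤ := by
      intro h
      have hle := hEWle j hj
      rw [h, ENNReal.mul_top (ENNReal.ofReal_pos.mpr (wgt_pos _ _)).ne'] at hle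
      exact (ENNReal.mul_ne_top hKEne (ENNReal.add_ne_top.mpr ⟨hPne j, hQne j⟩))
        (top_le_iff.mp hle)
    refine (ENNReal.summable_toReal hfin).congr fun k => ?_
    exact ENNReal.toReal_ofReal (norm_nonneg _)
  -- the per-j sums as ENNReal
  have hET : ∀ j : ℤ, j ≠ 0 →
      ENNReal.ofReal (∑' k : ℤ,
          ‖if k = 0 ∨ k = j then 0 else M j k * u (j - k) * v k‖)
        = ∑' k : ℤ, ENNReal.ofReal
            (‖if k = 0 ∨ k = j then 0 else M j k * u (j - k) * v k‖) :=
    fun j hj => ENNReal.ofReal_tsum_of_nonneg (fun k => norm_nonneg _) (hsum_k j hj)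
  have hWpt : ∀ j : ℤ,
      ENNReal.ofReal (phiW (s + ρ) (smoothW M u v) j) ≤ (KE * (P j + Q j)) ^ (2:ℝ) := by
    intro j
    by_cases hj : j = 0
    · subst hj
      rw [phiW, smoothW]
      simp
    · have hw : ‖smoothW M u v j‖ ≤
          ∑' k : ℤ, ‖if k = 0 ∨ k = j then 0 else M j k * u (j - k) * v k‖ := by
        rw [smoothW, if_neg hj]
        have hn := norm_tsum_le_tsum_norm
          (f := fun k : ℤ => if k = 0 ∨ k = j then (0:ℂ) else M j k * u (j - k) * v k)
          (by simpa using hsum_k j hj)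
        simpa using hn
      have hTnn : 0 ≤ ∑' k : ℤ,
          ‖if k = 0 ∨ k = j then 0 else M j k * u (j - k) * v k‖ :=
        tsum_nonneg fun k => norm_nonneg _
      have hle : phiW (s + ρ) (smoothW M u v) j ≤
          (wgt (s + ρ) j * ∑' k : ℤ,
            ‖if k = 0 ∨ k = j then 0 else M j k * u (j - k) * v k‖) ^ 2 := by
        rw [phiW, mul_pow, wgt_sq]
        exact mul_le_mul_of_nonneg_left
          (pow_le_pow_left₀ (norm_nonneg _) hw 2) (wgt_nonneg _ _)
      refine le_trans (ENNReal.ofReal_le_ofReal hle) ?_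
      rw [ofReal_sq (mul_nonneg (wgt_nonneg _ _) hTnn),
        ENNReal.ofReal_mul (wgt_nonneg _ _), hET j hj]
      exact ENNReal.rpow_le_rpow (hEWle j hj) (by norm_num)
  -- nonnegativity of the real sums
  have hNunn : 0 ≤ Nu := tsum_nonneg fun n => mul_nonneg (wgt_nonneg _ _) (by positivity)
  have hNvnn : 0 ≤ Nv := tsum_nonneg fun n => mul_nonneg (wgt_nonneg _ _) (by positivity)
  have hNu0nn : 0 ≤ Nu0 := tsum_nonneg fun n => mul_nonneg (wgt_nonneg _ _) (by positivity)
  have hNv0nn : 0 ≤ Nv0 := tsum_nonneg fun n => mul_nonneg (wgt_nonneg _ _) (by positivity)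
  set RE : ℝ := 4 * K ^ 2 * Ssum * (Nu0 * Nv + Nv0 * Nu) with hREdef
  have hREnn : 0 ≤ RE := by
    rw [hREdef]
    exact mul_nonneg (mul_nonneg (mul_nonneg (by norm_num) (sq_nonneg K)) hSnn)
      (add_nonneg (mul_nonneg hNu0nn hNvnn) (mul_nonneg hNv0nn hNunn))
  -- the grand total bound
  have htotal : ∑' j : ℤ, ENNReal.ofReal (phiW (s + ρ) (smoothW M u v) j)
      ≤ ENNReal.ofReal RE := by
    have h1 : ∑' j : ℤ, (P j) ^ (2:ℝ) ≤ L1u ^ (2:ℝ) * B := conv_sq (eW μ u) (eW s v)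
    have hQeq : ∀ j : ℤ, Q j = ∑' k : ℤ, eW μ v (j - k) * eW s u k := by
      intro j
      have heq := (Equiv.subLeft j).tsum_eq (fun k => eW s u (j - k) * eW μ v k)
      simp only [Equiv.subLeft_apply, sub_sub_cancel] at heq
      calc Q j = ∑' k : ℤ, eW s u (j - k) * eW μ v k := rfl
        _ = ∑' k : ℤ, eW s u k * eW μ v (j - k) := heq.symm
        _ = ∑' k : ℤ, eW μ v (j - k) * eW s u k := tsum_congr fun k => mul_comm _ _
    have h2 : ∑' j : ℤ, (Q j) ^ (2:ℝ) ≤ L1v ^ (2:ℝ) * A := by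
      calc ∑' j : ℤ, (Q j) ^ (2:ℝ)
          = ∑' j : ℤ, (∑' k : ℤ, eW μ v (j - k) * eW s u k) ^ (2:ℝ) :=
            tsum_congr fun j => by rw [hQeq j]
        _ ≤ L1v ^ (2:ℝ) * A := conv_sq (eW μ v) (eW s u)
    have h3 : L1u ^ (2:ℝ) ≤ (Se * A0 ^ (1/2:ℝ)) ^ (2:ℝ) :=
      ENNReal.rpow_le_rpow hL1u (by norm_num)
    have h4 : L1v ^ (2:ℝ) ≤ (Se * B0 ^ (1/2:ℝ)) ^ (2:ℝ) :=
      ENNReal.rpow_le_rpow hL1v (by norm_num)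
    have h5 : (Se * A0 ^ (1/2:ℝ)) ^ (2:ℝ) = ENNReal.ofReal Ssum * A0 := by
      rw [ENNReal.mul_rpow_of_nonneg _ _ (by norm_num : (0:ℝ) ≤ 2), hSedef,
        sq_rpow_half, sq_rpow_half]
    have h6 : (Se * B0 ^ (1/2:ℝ)) ^ (2:ℝ) = ENNReal.ofReal Ssum * B0 := by
      rw [ENNReal.mul_rpow_of_nonneg _ _ (by norm_num : (0:ℝ) ≤ 2), hSedef,
        sq_rpow_half, sq_rpow_half]
    calc ∑' j : ℤ, ENNReal.ofReal (phiW (s + ρ) (smoothW M u v) j)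
        ≤ ∑' j : ℤ, (KE * (P j + Q j)) ^ (2:ℝ) := ENNReal.tsum_le_tsum hWpt
      _ = ∑' j : ℤ, KE ^ (2:ℝ) * (P j + Q j) ^ (2:ℝ) :=
          tsum_congr fun j => ENNReal.mul_rpow_of_nonneg _ _ (by norm_num)
      _ = KE ^ (2:ℝ) * ∑' j : ℤ, (P j + Q j) ^ (2:ℝ) := ENNReal.tsum_mul_left
      _ ≤ KE ^ (2:ℝ) * ∑' j : ℤ, 4 * ((P j) ^ (2:ℝ) + (Q j) ^ (2:ℝ)) :=
          mul_le_mul_right (ENNReal.tsum_le_tsum fun j => ennreal_add_sq_le _ _) _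
      _ = KE ^ (2:ℝ) * (4 * ((∑' j : ℤ, (P j) ^ (2:ℝ)) + ∑' j : ℤ, (Q j) ^ (2:ℝ))) := by
          rw [ENNReal.tsum_mul_left, ENNReal.tsum_add]
      _ ≤ KE ^ (2:ℝ) * (4 * (L1u ^ (2:ℝ) * B + L1v ^ (2:ℝ) * A)) := by
          exact mul_le_mul_right (mul_le_mul_right (add_le_add h1 h2) _) _
      _ ≤ KE ^ (2:ℝ) * (4 * (ENNReal.ofReal Ssum * A0 * B + ENNReal.ofReal Ssum * B0 * A)) := by
          refine mul_le_mul_right (mul_le_mul_right (add_le_add ?_ ?_) _) _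
          · rw [← h5]; exact mul_le_mul_left h3 _
          · rw [← h6]; exact mul_le_mul_left h4 _
      _ = ENNReal.ofReal RE := by
          rw [hKEdef, ← ofReal_sq hKpos.le, hA, hB, hA0, hB0]
          rw [← ENNReal.ofReal_mul hSnn, ← ENNReal.ofReal_mul (mul_nonneg hSnn hNu0nn),
            ← ENNReal.ofReal_mul hSnn, ← ENNReal.ofReal_mul (mul_nonneg hSnn hNv0nn),
            ← ENNReal.ofReal_add (mul_nonneg (mul_nonneg hSnn hNu0nn) hNvnn)
              (mul_nonneg (mul_nonneg hSnn hNv0nn) hNunn),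
            show (4:ℝ≥0∞) = ENNReal.ofReal (4:ℝ) by norm_num,
            ← ENNReal.ofReal_mul (by norm_num : (0:ℝ) ≤ 4),
            ← ENNReal.ofReal_mul (sq_nonneg K), hREdef]
          congr 1
          ring
  -- summability of the weighted squares
  have hφnn : ∀ j : ℤ, 0 ≤ phiW (s + ρ) (smoothW M u v) j :=
    fun j => mul_nonneg (wgt_nonneg _ _) (by positivity)
  have hφsum : Summable (phiW (s + ρ) (smoothW M u v)) := by
    have hne : (∑' j : ℤ, ENNReal.ofReal (phiW (s + ρ) (smoothW M u v) j)) ≠ ⊤ :=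
      ne_top_of_le_ne_top ENNReal.ofReal_ne_top htotal
    exact (ENNReal.summable_toReal hne).congr fun j => ENNReal.toReal_ofReal (hφnn j)
  refine ⟨hsum_k, hφsum, ?_⟩
  -- the norm bound
  have hofReal_tsum : ENNReal.ofReal (∑' j : ℤ, phiW (s + ρ) (smoothW M u v) j)
      = ∑' j : ℤ, ENNReal.ofReal (phiW (s + ρ) (smoothW M u v) j) :=
    ENNReal.ofReal_tsum_of_nonneg hφnn hφsum
  have hreal : (∑' j : ℤ, phiW (s + ρ) (smoothW M u v) j) ≤ RE :=
    (ENNReal.ofReal_le_ofReal_iff hREnn).mp (hofReal_tsum ▸ htotal)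
  have hHw : Hnorm (s + ρ) (smoothW M u v)
      = Real.sqrt (∑' j : ℤ, phiW (s + ρ) (smoothW M u v) j) := rfl
  have hHu : Hnorm s u = Real.sqrt Nu := rfl
  have hHv : Hnorm s v = Real.sqrt Nv := rfl
  have hHu0 : Hnorm s0 u = Real.sqrt Nu0 := rfl
  have hHv0 : Hnorm s0 v = Real.sqrt Nv0 := rfl
  rw [hHw, hHu, hHv, hHu0, hHv0]
  calc Real.sqrt (∑' j : ℤ, phiW (s + ρ) (smoothW M u v) j)
      ≤ Real.sqrt RE := Real.sqrt_le_sqrt hreal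
    _ = Real.sqrt (4 * K ^ 2 * Ssum) * Real.sqrt (Nu0 * Nv + Nv0 * Nu) := by
        rw [hREdef, Real.sqrt_mul (by positivity)]
    _ ≤ C * (Real.sqrt (Nu0 * Nv) + Real.sqrt (Nv0 * Nu)) := by
        rw [← hCdef]
        exact mul_le_mul_of_nonneg_left
          (sqrt_add_le' (mul_nonneg hNu0nn hNvnn) (mul_nonneg hNv0nn hNunn)) hCpos.le
    _ = C * (Real.sqrt Nu * Real.sqrt Nv0 + Real.sqrt Nu0 * Real.sqrt Nv) := by
        rw [Real.sqrt_mul hNu0nn, Real.sqrt_mul hNv0nn]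
        ring
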